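/- Let ξ = log 2 / log 3. If a, b, c are nonnegative reals with a ≥ b ≥ c and a + b + c = m, then a^ξ + b^ξ ≥ m^ξ. -/

import Mathlib

/-- If `a ≥ b ≥ c ≥ 0` and `a + b + c = m`, then `a^ξ + b^ξ ≥ m^ξ` with
`ξ = log 2 / log 3`. -/
theorem rpow_logtwo_logthree_ineq (a b c m : ℝ) (hc : 0 ≤ c) (hcb : c ≤ b) (hba : b ≤ a)
    (hm : a + b + c = m) :
    m ^ (Real.log 2 / Real.log 3) ≤
      a ^ (Real.log 2 / Real.log 3) + b ^ (Real.log 2 / Real.log 3) := by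
  set ξ := Real.log 2 / Real.log 3 with hξdef
  have hlog3 : (0:ℝ) < Real.log 3 := Real.log_pos (by norm_num)
  have hlog2 : (0:ℝ) < Real.log 2 := Real.log_pos (by norm_num)
  have hξ0 : 0 < ξ := div_pos hlog2 hlog3
  have hξ1 : ξ < 1 := (div_lt_one hlog3).mpr (Real.log_lt_log (by norm_num) (by norm_num))
  have h3 : (3:ℝ) ^ ξ = 2 := by
    rw [hξdef, ← Real.logb, Real.rpow_logb (by norm_num) (by norm_num) (by norm_num)]
  have hb : 0 ≤ b := hc.trans hcb
  have ha : 0 ≤ a := hb.trans hba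
  rcases eq_or_lt_of_le hb with hb0 | hb0
  · have hc0 : c = 0 := le_antisymm (hcb.trans hb0.symm.le) hc
    have hma : m = a := by rw [← hm, ← hb0, hc0]; ring
    rw [hma, ← hb0, Real.zero_rpow (ne_of_gt hξ0)]
    linarith
  · have hab : 0 < a + b := by linarith
    have hconc : ConcaveOn ℝ (Set.Ici (0:ℝ)) (fun x : ℝ => x ^ ξ) :=
      Real.concaveOn_rpow hξ0.le hξ1.le
    set θ : ℝ := (a - b) / (a + b) with hθdef
    set μ : ℝ := 2 * b / (a + b) with hμdef
    have hθ : 0 ≤ θ := div_nonneg (by linarith) hab.le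
    have hμ : 0 ≤ μ := div_nonneg (by linarith) hab.le
    have hθμ : θ + μ = 1 := by
      rw [hθdef, hμdef, ← add_div, div_eq_one_iff_eq hab.ne']
      ring
    have h1 := hconc.2 (Set.mem_Ici.mpr (by linarith : (0:ℝ) ≤ a + 2*b))
      (Set.mem_Ici.mpr hb) hθ hμ hθμ
    have h2 := hconc.2 (Set.mem_Ici.mpr (by linarith : (0:ℝ) ≤ a + 2*b))
      (Set.mem_Ici.mpr hb) hμ hθ (by linarith)
    simp only [smul_eq_mul] at h1 h2
    have e1 : θ * (a + 2*b) + μ * b = a := by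
      rw [hθdef, hμdef, div_mul_eq_mul_div, div_mul_eq_mul_div, ← add_div, div_eq_iff hab.ne']; ring
    have e2 : μ * (a + 2*b) + θ * b = 3 * b := by
      rw [hθdef, hμdef, div_mul_eq_mul_div, div_mul_eq_mul_div, ← add_div, div_eq_iff hab.ne']; ring
    rw [e1] at h1
    rw [e2] at h2
    have key : (a + 2*b) ^ ξ + b ^ ξ ≤ a ^ ξ + (3*b) ^ ξ := by
      have hx : θ * (a + 2*b) ^ ξ + μ * b ^ ξ + (μ * (a + 2*b) ^ ξ + θ * b ^ ξ)
          = (a + 2*b) ^ ξ + b ^ ξ := by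
        linear_combination ((a + 2*b) ^ ξ) * hθμ + (b ^ ξ) * hθμ
      linarith
    have h3b : (3*b) ^ ξ = 2 * b ^ ξ := by
      rw [Real.mul_rpow (by norm_num) hb, h3]
    have hmon : m ^ ξ ≤ (a + 2*b) ^ ξ :=
      Real.rpow_le_rpow (by linarith) (by linarith) hξ0.le
    linarith [key, h3b, hmon]
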